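/- Kernel ℓ1-Norm Bound by the Convolution Spectral Norm (key bound in Lemma 2.7): Let M, C, D be powers of two with D ≤ M, let K be a rank-4 kernel tensor with complex entries K_{i,j,k,l} for i,j ∈ [C], k,l ∈ [D], let Q := Σ_{j=0}^{M−2} |j+1⟩⟨j| be the M×M discrete unilateral shift matrix, and let 𝒞 := Σ_{i∈[C]} Σ_{j∈[C]} Σ_{k∈[D]} Σ_{l∈[D]} K_{i,j,k,l} (|i⟩⟨j| ⊗ Q^l ⊗ Q^k). Then for every x₁ ∈ [C], Σ_{j∈[C]} Σ_{k∈[D]} Σ_{l∈[D]} |K_{x₁,j,k,l}|² ≤ ‖𝒞‖₂², and consequently Σ_{i,j∈[C]} Σ_{k,l∈[D]} |K_{i,j,k,l}| ≤ D C^{3/2} ‖𝒞‖₂, where ‖𝒞‖₂ is the spectral (ℓ2 operator) norm. -/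

import Mathlib

open scoped Kronecker Matrix

noncomputable section

/-- The spectral (ℓ²→ℓ²) operator norm of a matrix. -/
def specNorm {𝕜 : Type*} [RCLike 𝕜] {m n : Type*} [Fintype m] [Fintype n] [DecidableEq n]
    (A : Matrix m n 𝕜) : ℝ :=
  ‖LinearMap.toContinuousLinearMap (Matrix.toEuclideanLin A)‖



lemma shift_pow_apply {M : ℕ} (l : ℕ) (a b : Fin M) :
    (((Matrix.of fun i j : Fin M => if (i : ℕ) = (j : ℕ) + 1 then (1:ℂ) else 0)) ^ l) a b
      = if (a : ℕ) = (b : ℕ) + l then 1 else 0 := by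
  induction l generalizing b with
  | zero => simp [Matrix.one_apply, Fin.ext_iff, eq_comm]
  | succ l ih =>
    rw [pow_succ, Matrix.mul_apply]
    simp only [ih, Matrix.of_apply]
    by_cases h : (b : ℕ) + 1 < M
    · rw [Finset.sum_eq_single (⟨(b:ℕ)+1, h⟩ : Fin M)]
      · have : (b : ℕ) + 1 + l = (b:ℕ) + (l+1) := by omega
        simp [this]
      · intro c _ hc
        have : (c : ℕ) ≠ (b : ℕ) + 1 := fun hh => hc (by ext; simpa using hh)
        simp [this]
      · simp
    · have h2 : ∀ c : Fin M, ¬ ((c:ℕ) = (b:ℕ) + 1) := fun c => by have := c.isLt; omega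
      have h3 : ¬ ((a:ℕ) = (b:ℕ) + (l+1)) := by have := a.isLt; omega
      simp [h2, h3]



lemma row_sq_sum_le {m n : Type*} [Fintype m] [Fintype n] [DecidableEq n]
    (A : Matrix m n ℂ) (r : m) :
    ∑ c, ‖A r c‖ ^ 2 ≤ specNorm A ^ 2 := by
  classical
  set S := ∑ c, ‖A r c‖ ^ 2 with hS
  have hS0 : 0 ≤ S := Finset.sum_nonneg fun c _ => sq_nonneg _
  set v : EuclideanSpace ℂ n := (WithLp.equiv 2 (n → ℂ)).symm (fun c => star (A r c)) with hv
  have hvn : ‖v‖ = Real.sqrt S := by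
    rw [EuclideanSpace.norm_eq]
    congr 1
    rw [hS]
    refine Finset.sum_congr rfl fun c _ => ?_
    show ‖star (A r c)‖ ^ 2 = ‖A r c‖ ^ 2
    rw [show star (A r c) = (starRingEnd ℂ) (A r c) from rfl, Complex.norm_conj]
  have happ : Matrix.toEuclideanLin A v r = (S : ℂ) := by
    rw [Matrix.toEuclideanLin_apply]
    have : (WithLp.equiv 2 (n → ℂ)) v = fun c => star (A r c) := rfl
    rw [show v.ofLp = fun c => star (A r c) from this]
    show ∑ c, A r c * star (A r c) = _
    rw [hS]
    push_cast
    refine Finset.sum_congr rfl fun c _ => ?_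
    rw [show star (A r c) = (starRingEnd ℂ) (A r c) from rfl, Complex.mul_conj]
    rw [Complex.normSq_eq_norm_sq]
    norm_cast
  have hcoord : ‖Matrix.toEuclideanLin A v r‖ ≤ ‖Matrix.toEuclideanLin A v‖ := by
    rw [EuclideanSpace.norm_eq]
    have h1 : ‖Matrix.toEuclideanLin A v r‖
        = Real.sqrt (‖Matrix.toEuclideanLin A v r‖ ^ 2) := by
      rw [Real.sqrt_sq (norm_nonneg _)]
    rw [h1]
    apply Real.sqrt_le_sqrt
    exact Finset.single_le_sum (f := fun i => ‖Matrix.toEuclideanLin A v i‖ ^ 2)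
      (fun i _ => sq_nonneg _) (Finset.mem_univ r)
  have hop : ‖Matrix.toEuclideanLin A v‖ ≤ specNorm A * ‖v‖ :=
    (LinearMap.toContinuousLinearMap (Matrix.toEuclideanLin A)).le_opNorm v
  have key : S ≤ specNorm A * Real.sqrt S := by
    calc S = ‖(S : ℂ)‖ := by rw [Complex.norm_real, Real.norm_of_nonneg hS0]
    _ = ‖Matrix.toEuclideanLin A v r‖ := by rw [happ]
    _ ≤ ‖Matrix.toEuclideanLin A v‖ := hcoord
    _ ≤ specNorm A * ‖v‖ := hop
    _ = specNorm A * Real.sqrt S := by rw [hvn]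
  rcases eq_or_lt_of_le hS0 with h0 | h0
  · rw [← h0]; positivity
  · have hsq : Real.sqrt S ≤ specNorm A := by
      have hs0 : 0 < Real.sqrt S := Real.sqrt_pos.mpr h0
      have h2 : Real.sqrt S * Real.sqrt S ≤ specNorm A * Real.sqrt S := by
        rw [Real.mul_self_sqrt hS0]; exact key
      exact le_of_mul_le_mul_right h2 hs0
    calc S = Real.sqrt S ^ 2 := (Real.sq_sqrt hS0).symm
    _ ≤ specNorm A ^ 2 := by
        apply pow_le_pow_left₀ (Real.sqrt_nonneg _) hsq


set_option maxRecDepth 8000 in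
set_option maxHeartbeats 1600000 in
/-- **Kernel ℓ¹-norm bound by the convolution spectral norm** (key bound in Lemma 2.7).
For the matrix form `𝒞 = Σ_{i,j,k,l} K_{i,j,k,l} (|i⟩⟨j| ⊗ Q^l ⊗ Q^k)` of a 2D
multi-filter convolution: every "output-channel slice" of the kernel has squared
ℓ²-norm at most `‖𝒞‖₂²`, and hence
`Σ_{i,j,k,l} |K_{i,j,k,l}| ≤ D C^{3/2} ‖𝒞‖₂`. -/
theorem kernel_l1_norm_bound
    (mm cc dd : ℕ) (hDM : (2:ℕ)^dd ≤ 2^mm)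
    (K : Fin (2^cc) → Fin (2^cc) → Fin (2^dd) → Fin (2^dd) → ℂ)
    (Q : Matrix (Fin (2^mm)) (Fin (2^mm)) ℂ)
    (hQ : Q = Matrix.of fun i j : Fin (2^mm) => if (i : ℕ) = (j : ℕ) + 1 then 1 else 0)
    (Cmat : Matrix (Fin (2^cc) × (Fin (2^mm) × Fin (2^mm)))
        (Fin (2^cc) × (Fin (2^mm) × Fin (2^mm))) ℂ)
    (hC : Cmat = ∑ i : Fin (2^cc), ∑ j : Fin (2^cc), ∑ k : Fin (2^dd), ∑ l : Fin (2^dd),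
        K i j k l • (Matrix.single i j (1 : ℂ) ⊗ₖ ((Q ^ (l : ℕ)) ⊗ₖ (Q ^ (k : ℕ))))) :
    (∀ x₁ : Fin (2^cc),
      ∑ j : Fin (2^cc), ∑ k : Fin (2^dd), ∑ l : Fin (2^dd),
          ‖K x₁ j k l‖ ^ 2 ≤ specNorm Cmat ^ 2) ∧
    ∑ i : Fin (2^cc), ∑ j : Fin (2^cc), ∑ k : Fin (2^dd), ∑ l : Fin (2^dd),
        ‖K i j k l‖
      ≤ ((2:ℝ)^dd) * ((2:ℝ)^cc) ^ ((3:ℝ)/2) * specNorm Cmat := by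
  have hσ : 0 ≤ specNorm Cmat := norm_nonneg _
  have h1' : ∀ x₁ : Fin (2^cc),
      ∑ j : Fin (2^cc), ∑ k : Fin (2^dd), ∑ l : Fin (2^dd),
          ‖K x₁ j k l‖ ^ 2 ≤ specNorm Cmat ^ 2 := by
    intro x₁
    have hDpos : 0 < 2^dd := Nat.pow_pos (n := dd) (by norm_num)
    have hDlt : 2^dd - 1 < 2^mm := by omega
    have hsub : ∀ t : Fin (2^dd), 2^dd - 1 - (t:ℕ) < 2^mm := fun t => by omega
    set r : Fin (2^cc) × (Fin (2^mm) × Fin (2^mm)) :=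
      (x₁, (⟨2^dd - 1, hDlt⟩, ⟨2^dd - 1, hDlt⟩)) with hr
    set emb : Fin (2^cc) × (Fin (2^dd) × Fin (2^dd)) → Fin (2^cc) × (Fin (2^mm) × Fin (2^mm)) :=
      fun p => (p.1, (⟨2^dd - 1 - (p.2.2:ℕ), hsub p.2.2⟩, ⟨2^dd - 1 - (p.2.1:ℕ), hsub p.2.1⟩))
      with hemb
    have hentry : ∀ (j : Fin (2^cc)) (k l : Fin (2^dd)),
        Cmat r (emb (j, (k, l))) = K x₁ j k l := by
      intro j k l
      rw [hC]
      rw [Matrix.sum_apply, Finset.sum_eq_single x₁]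
      rotate_left
      · intro i _ hi
        rw [Matrix.sum_apply]
        apply Finset.sum_eq_zero; intro j' _
        rw [Matrix.sum_apply]
        apply Finset.sum_eq_zero; intro k' _
        rw [Matrix.sum_apply]
        apply Finset.sum_eq_zero; intro l' _
        simp [hr, hemb, Matrix.kroneckerMap_apply, Matrix.single_apply_of_row_ne hi]
      · simp
      rw [Matrix.sum_apply, Finset.sum_eq_single j]
      rotate_left
      · intro j' _ hj'
        rw [Matrix.sum_apply]
        apply Finset.sum_eq_zero; intro k' _
        rw [Matrix.sum_apply]
        apply Finset.sum_eq_zero; intro l' _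
        simp [hr, hemb, Matrix.kroneckerMap_apply, Matrix.single_apply_of_col_ne _ _ hj']
      · simp
      rw [Matrix.sum_apply, Finset.sum_eq_single k]
      rotate_left
      · intro k' _ hk'
        rw [Matrix.sum_apply]
        apply Finset.sum_eq_zero; intro l' _
        have hne : ¬ ((2^dd - 1 : ℕ) = (2^dd - 1 - (k:ℕ)) + (k':ℕ)) := by
          have := k.isLt; have := k'.isLt
          intro h; apply hk'; ext; omega
        simp [hr, hemb, hQ, Matrix.kroneckerMap_apply, shift_pow_apply, hne]
      · simp
      rw [Matrix.sum_apply, Finset.sum_eq_single l]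
      rotate_left
      · intro l' _ hl'
        have hne : ¬ ((2^dd - 1 : ℕ) = (2^dd - 1 - (l:ℕ)) + (l':ℕ)) := by
          have := l.isLt; have := l'.isLt
          intro h; apply hl'; ext; omega
        simp [hr, hemb, hQ, Matrix.kroneckerMap_apply, shift_pow_apply, hne]
      · simp
      have h1 : ((2:ℕ)^dd - 1 : ℕ) = 2^dd - 1 - (l:ℕ) + (l:ℕ) := by
        have := l.isLt; omega
      have h2 : ((2:ℕ)^dd - 1 : ℕ) = 2^dd - 1 - (k:ℕ) + (k:ℕ) := by
        have := k.isLt; omega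
      simp only [hr, hemb, hQ, Matrix.smul_apply, Matrix.kroneckerMap_apply,
        Matrix.single_apply_same, shift_pow_apply]
      rw [if_pos h1, if_pos h2]
      simp
    have hinj : Set.InjOn emb (Finset.univ : Finset (Fin (2^cc) × (Fin (2^dd) × Fin (2^dd)))) := by
      intro p _ q _ h
      simp only [hemb, Prod.mk.injEq, Fin.mk.injEq] at h
      obtain ⟨h1, h2, h3⟩ := h
      have := p.2.1.isLt; have := q.2.1.isLt; have := p.2.2.isLt; have := q.2.2.isLt
      ext
      · exact congrArg Fin.val h1
      · omega
      · omega
    calc ∑ j : Fin (2^cc), ∑ k : Fin (2^dd), ∑ l : Fin (2^dd), ‖K x₁ j k l‖ ^ 2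
        = ∑ p : Fin (2^cc) × (Fin (2^dd) × Fin (2^dd)),
            ‖Cmat r (emb p)‖ ^ 2 := by
          rw [Fintype.sum_prod_type]
          refine Finset.sum_congr rfl fun j _ => ?_
          rw [Fintype.sum_prod_type]
          refine Finset.sum_congr rfl fun k _ => Finset.sum_congr rfl fun l _ => ?_
          rw [hentry j k l]
      _ = ∑ c ∈ Finset.univ.image emb, ‖Cmat r c‖ ^ 2 :=
          by exact (Finset.sum_image (f := fun c => ‖Cmat r c‖ ^ 2) (g := emb) (fun p hp q hq h => hinj hp hq h)).symm
      _ ≤ ∑ c, ‖Cmat r c‖ ^ 2 :=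
          Finset.sum_le_sum_of_subset_of_nonneg (Finset.subset_univ _)
            (fun c _ _ => sq_nonneg _)
      _ ≤ specNorm Cmat ^ 2 := row_sq_sum_le Cmat r
  refine ⟨h1', ?_⟩
  have hslice : ∀ i : Fin (2^cc),
      ∑ j : Fin (2^cc), ∑ k : Fin (2^dd), ∑ l : Fin (2^dd), ‖K i j k l‖
        ≤ Real.sqrt ((2:ℝ)^cc) * ((2:ℝ)^dd) * specNorm Cmat := by
    intro i
    set f : Fin (2^cc) × (Fin (2^dd) × Fin (2^dd)) → ℝ :=
      fun p => ‖K i p.1 p.2.1 p.2.2‖ with hf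
    have hrw : ∑ j, ∑ k, ∑ l, ‖K i j k l‖ = ∑ p, f p := by
      rw [Fintype.sum_prod_type]
      exact Finset.sum_congr rfl fun j _ => by rw [Fintype.sum_prod_type]
    have hrw2 : ∑ j, ∑ k, ∑ l, ‖K i j k l‖ ^ 2 = ∑ p, f p ^ 2 := by
      rw [Fintype.sum_prod_type]
      exact Finset.sum_congr rfl fun j _ => by rw [Fintype.sum_prod_type]
    have hcs : (∑ p, f p) ^ 2 ≤ ((2:ℝ)^cc * (2^dd * 2^dd)) * ∑ p, f p ^ 2 := by
      have := sq_sum_le_card_mul_sum_sq (s := Finset.univ) (f := f)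
      have hcard : ((Finset.univ : Finset (Fin (2^cc) × (Fin (2^dd) × Fin (2^dd)))).card : ℝ)
          = (2:ℝ)^cc * (2^dd * 2^dd) := by
        simp [Finset.card_univ]
        try push_cast
        try ring
      calc (∑ p, f p) ^ 2 ≤ ((Finset.univ.card : ℕ) : ℝ) * ∑ p, f p ^ 2 := by exact_mod_cast this
        _ = _ := by rw [hcard]
    have hsum2 : ∑ p, f p ^ 2 ≤ specNorm Cmat ^ 2 := by rw [← hrw2]; exact h1' i
    have hnn : (0:ℝ) ≤ ∑ p, f p := Finset.sum_nonneg fun p _ => norm_nonneg _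
    rw [hrw]
    have hfinal : (∑ p, f p) ^ 2 ≤ (Real.sqrt ((2:ℝ)^cc) * ((2:ℝ)^dd) * specNorm Cmat) ^ 2 := by
      calc (∑ p, f p) ^ 2 ≤ ((2:ℝ)^cc * (2^dd * 2^dd)) * ∑ p, f p ^ 2 := hcs
        _ ≤ ((2:ℝ)^cc * (2^dd * 2^dd)) * specNorm Cmat ^ 2 := by
            apply mul_le_mul_of_nonneg_left hsum2 (by positivity)
        _ = (Real.sqrt ((2:ℝ)^cc) * ((2:ℝ)^dd) * specNorm Cmat) ^ 2 := by
            rw [mul_pow, mul_pow, Real.sq_sqrt (by positivity)]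
            ring
    have := Real.sqrt_le_sqrt hfinal
    rwa [Real.sqrt_sq hnn, Real.sqrt_sq (by positivity)] at this
  calc ∑ i : Fin (2^cc), ∑ j, ∑ k, ∑ l, ‖K i j k l‖
      ≤ ∑ _i : Fin (2^cc), Real.sqrt ((2:ℝ)^cc) * ((2:ℝ)^dd) * specNorm Cmat :=
        Finset.sum_le_sum fun i _ => hslice i
    _ = (2:ℝ)^cc * (Real.sqrt ((2:ℝ)^cc) * ((2:ℝ)^dd) * specNorm Cmat) := by
        rw [Finset.sum_const, Finset.card_univ, Fintype.card_fin]
        ring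
    _ = ((2:ℝ)^dd) * ((2:ℝ)^cc) ^ ((3:ℝ)/2) * specNorm Cmat := by
        have h32 : ((2:ℝ)^cc) ^ ((3:ℝ)/2) = (2:ℝ)^cc * Real.sqrt ((2:ℝ)^cc) := by
          rw [show (3:ℝ)/2 = 1 + 1/2 by norm_num, Real.rpow_add (by positivity),
            Real.rpow_one, ← Real.sqrt_eq_rpow]
        rw [h32]
        ring
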